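/- Let A, B ∈ ℂ^{n×n} admit a decomposition T·A·S = diag(J, I_{n−d}), T·B·S = diag(I_d, 0) with S, T invertible, where J ∈ ℂ^{d×d} is block diagonal in Jordan form: J = diag(J_{d₁}(λ₁),…,J_{d_m}(λ_m)) with Σ_{i=1}^m d_i = d, each block J_{d_i}(λ_i) being the d_i×d_i upper Jordan block λ_i I + (superdiagonal of ones). Fix s = d₁+⋯+d_l (the eigenvalues λ₁,…,λ_l being the targets) and assume d_i = 1 for all i > l (eigenvalues outside the region are simple). Let z₁,…,z_q ∈ ℂ with det(z_j I_d − J) ≠ 0 for all j, weights ω₁,…,ω_q ∈ ℂ, and define f̃(μ) = (1/(2π√−1)) Σ_{j=1}^q ω_j/(z_j − μ); assume |f̃(λ₁)| ≥ |f̃(λ₂)| ≥ ⋯ ≥ |f̃(λ_m)| and f̃(λ_i) ≠ 0 for 1 ≤ i ≤ l. Let t and l' be integers with l < l' ≤ m, t = Σ_{i=1}^{l'} d_i (so s < t ≤ d), and let Y ∈ ℂ^{n×t} be such that (S^{-1})_{(1:t,:)}·Y is invertible. Set D = (1/(2π√−1)) Σ_{j=1}^q ω_j diag((z_j I_d − J)^{-1},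 0), M = S·D·S^{-1}, and define the iteration U^{(0)} = Y, U^{(k)} = M·U_{k−1} where U^{(k−1)} = U_{k−1}·R_{k−1} with R_{k−1} ∈ ℂ^{t×t} invertible. Then for each 1 ≤ j ≤ l, setting c_j = 1 + d₁+⋯+d_{j−1} (so that the c_j-th column S_{(:,c_j)} of S is an eigenvector of the pencil (A,B) for λ_j), there exists a constant τ_j ≥ 0 such that for all k ≥ 1 there exists v ∈ column space of U^{(k)} with ‖S_{(:,c_j)} − v‖₂ ≤ τ_j (|f̃(λ_{l'})| / |f̃(λ_j)|)^k; in particular ‖(I_n − Q_{(k)}) S_{(:,c_j)}‖₂ ≤ τ_j (|f̃(λ_{l'})| / |f̃(λ_j)|)^k, where Q_{(k)} is the orthogonal projector onto the column space of U^{(k)}. -/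

import Mathlib

open Matrix

/-- The Euclidean (ℓ²) norm of a vector in `ℂⁿ`. -/
noncomputable def e2Norm {n : ℕ} (x : Fin n → ℂ) : ℝ :=
  ‖(WithLp.equiv 2 (Fin n → ℂ)).symm x‖

lemma e2Norm_eq {n : ℕ} (x : Fin n → ℂ) :
    e2Norm x = Real.sqrt (∑ i, ‖x i‖ ^ 2) := by
  unfold e2Norm
  rw [EuclideanSpace.norm_eq]
  simp

lemma e2Norm_nonneg {n : ℕ} (x : Fin n → ℂ) : 0 ≤ e2Norm x :=
  (e2Norm_eq x) ▸ Real.sqrt_nonneg _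

lemma e2Norm_le_mul {n : ℕ} (u v : Fin n → ℂ) (r : ℝ) (hr : 0 ≤ r)
    (h : ∀ i, ‖u i‖ ≤ r * ‖v i‖) :
    e2Norm u ≤ r * e2Norm v := by
  rw [e2Norm_eq, e2Norm_eq]
  have h1 : ∑ i, ‖u i‖ ^ 2 ≤ r ^ 2 * ∑ i, ‖v i‖ ^ 2 := by
    rw [Finset.mul_sum]
    refine Finset.sum_le_sum fun i _ => ?_
    have := pow_le_pow_left₀ (norm_nonneg _) (h i) 2
    calc ‖u i‖ ^ 2 ≤ (r * ‖v i‖) ^ 2 := this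
      _ = r ^ 2 * ‖v i‖ ^ 2 := by ring
  calc Real.sqrt (∑ i, ‖u i‖ ^ 2)
      ≤ Real.sqrt (r ^ 2 * ∑ i, ‖v i‖ ^ 2) := Real.sqrt_le_sqrt h1
    _ = r * Real.sqrt (∑ i, ‖v i‖ ^ 2) := by
        rw [Real.sqrt_mul (sq_nonneg r), Real.sqrt_sq hr]

noncomputable def euclMap {n : ℕ} (S : Matrix (Fin n) (Fin n) ℂ) :
    EuclideanSpace ℂ (Fin n) →L[ℂ] EuclideanSpace ℂ (Fin n) :=
  LinearMap.toContinuousLinearMap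
    (((WithLp.linearEquiv 2 ℂ (Fin n → ℂ)).symm.toLinearMap.comp S.mulVecLin).comp
      (WithLp.linearEquiv 2 ℂ (Fin n → ℂ)).toLinearMap)

lemma e2Norm_mulVec_le {n : ℕ} (S : Matrix (Fin n) (Fin n) ℂ) (w : Fin n → ℂ) :
    e2Norm (S.mulVec w) ≤ ‖euclMap S‖ * e2Norm w := by
  have h : (WithLp.equiv 2 (Fin n → ℂ)).symm (S.mulVec w)
      = euclMap S ((WithLp.equiv 2 (Fin n → ℂ)).symm w) := rfl
  unfold e2Norm
  rw [h]
  exact (euclMap S).le_opNorm _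

lemma exists_block (f : ℕ → ℕ) (h0 : f 0 = 0) :
    ∀ N r, r < f N → ∃ i, i < N ∧ f i ≤ r ∧ r < f (i + 1) := by
  intro N
  induction N with
  | zero => intro r hr; omega
  | succ N ih =>
      intro r hr
      by_cases hc : f N ≤ r
      · exact ⟨N, Nat.lt_succ_self N, hc, hr⟩
      · obtain ⟨i, h1, h2, h3⟩ := ih r (by omega)
        exact ⟨i, by omega, h2, h3⟩

lemma inv_col {d : ℕ} (Bm : Matrix (Fin d) (Fin d) ℂ) (hdet : IsUnit Bm.det)
    (a0 : Fin d) (μ0 : ℂ) (hcol : ∀ r, Bm r a0 = if r = a0 then μ0 else 0) :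
    ∀ r, Bm⁻¹ r a0 = if r = a0 then μ0⁻¹ else 0 := by
  have hmv : Bm.mulVec ((Pi.single a0 1 : Fin d → ℂ)) = μ0 • (Pi.single a0 1 : Fin d → ℂ) := by
    funext r
    simp only [Matrix.mulVec, dotProduct, Pi.single_apply, Pi.smul_apply,
      mul_ite, mul_one, mul_zero, Finset.sum_ite_eq', Finset.mem_univ, if_true, hcol r,
      smul_eq_mul]
  have hμ0 : μ0 ≠ 0 := by
    intro h0
    have h1 : Bm.mulVec ((Pi.single a0 1 : Fin d → ℂ)) = 0 := by rw [hmv, h0, zero_smul]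
    have h2 : (Pi.single a0 1 : Fin d → ℂ) = 0 := by
      have h3 := congrArg (fun v => Bm⁻¹.mulVec v) h1
      simp only [Matrix.mulVec_mulVec, Matrix.nonsing_inv_mul Bm hdet, Matrix.one_mulVec,
        Matrix.mulVec_zero] at h3
      exact h3
    have := congrFun h2 a0
    simp at this
  have hinv : Bm⁻¹.mulVec ((Pi.single a0 1 : Fin d → ℂ)) = μ0⁻¹ • (Pi.single a0 1 : Fin d → ℂ) := by
    have h1 : Bm⁻¹.mulVec (Bm.mulVec ((Pi.single a0 1 : Fin d → ℂ))) = (Pi.single a0 1 : Fin d → ℂ) := by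
      rw [Matrix.mulVec_mulVec, Matrix.nonsing_inv_mul Bm hdet, Matrix.one_mulVec]
    rw [hmv, Matrix.mulVec_smul] at h1
    have := congrArg (fun v => μ0⁻¹ • v) h1
    simpa [smul_smul, inv_mul_cancel₀ hμ0] using this
  intro r
  have := congrFun hinv r
  simpa [Matrix.mulVec, dotProduct, Pi.single_apply, mul_ite, mul_one, mul_zero,
    Finset.sum_ite_eq', Pi.smul_apply, smul_eq_mul] using this

lemma proj_norm_le {n : ℕ} (Q : Matrix (Fin n) (Fin n) ℂ) (hH : Q.IsHermitian)
    (hI : Q * Q = Q) (u : Fin n → ℂ) :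
    e2Norm (u - Q.mulVec u) ≤ e2Norm u := by
  set p := Q.mulVec u with hp
  set wv := u - Q.mulVec u with hw
  have hQw : Q.mulVec wv = 0 := by
    rw [hw, Matrix.mulVec_sub, Matrix.mulVec_mulVec, hI, sub_self]
  have hdot : ∑ i, (starRingEnd ℂ) (p i) * wv i = 0 := by
    have h1 : star p ⬝ᵥ wv = 0 := by
      rw [hp, Matrix.star_mulVec, ← Matrix.dotProduct_mulVec, hH.eq, hQw,
        dotProduct_zero]
    simpa [dotProduct, Pi.star_apply, RCLike.star_def] using h1
  have hdot2 : ∑ i, p i * (starRingEnd ℂ) (wv i) = 0 := by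
    have := congrArg (starRingEnd ℂ) hdot
    rw [map_sum, map_zero] at this
    simpa [mul_comm] using this
  have hterm : ∀ i, ‖u i‖ ^ 2 =
      ‖p i‖ ^ 2 + ‖wv i‖ ^ 2
        + 2 * (p i * (starRingEnd ℂ) (wv i)).re := by
    intro i
    have hui : u i = p i + wv i := by rw [hw]; simp [hp]
    rw [hui, Complex.sq_norm, Complex.sq_norm, Complex.sq_norm, Complex.normSq_add]
  have hsum : ∑ i, ‖u i‖ ^ 2 =
      ∑ i, ‖p i‖ ^ 2 + ∑ i, ‖wv i‖ ^ 2 := by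
    rw [Finset.sum_congr rfl (fun i _ => hterm i)]
    rw [Finset.sum_add_distrib, Finset.sum_add_distrib, ← Finset.mul_sum,
      ← Complex.re_sum, hdot2]
    simp
  rw [e2Norm_eq, e2Norm_eq]
  apply Real.sqrt_le_sqrt
  rw [hsum]
  have : 0 ≤ ∑ i, ‖p i‖ ^ 2 :=
    Finset.sum_nonneg fun i _ => sq_nonneg _
  linarith

set_option maxHeartbeats 2000000 in
/-- Convergence of the filtered subspace iteration underlying the
randomized FEAST algorithm: with `T·A·S = diag(J, I_{n−d})`, `T·B·S = diag(I_d, 0)`,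
`J` block diagonal in Jordan form with blocks `J_{dᵢ}(λᵢ)` (`i = 0,…,m−1`,
0-indexed; block `i` occupies indices `cum i ≤ a < cum (i+1)` where
`cum i = d₀ + ⋯ + d_{i−1}`), target blocks `i < l`, simple eigenvalues outside
(`dᵢ = 1` for `l ≤ i < m`), filter `f̃(μ) = (1/(2π√−1)) Σ_j ω_j/(z_j − μ)` with
`|f̃(λ₀)| ≥ ⋯ ≥ |f̃(λ_{m−1})|` and `f̃(λᵢ) ≠ 0` for `i < l`, subspace size
`t = cum (lp+1)` for some `l ≤ lp < m`, starting block `Y` with `(S⁻¹)_{(1:t,:)}·Y`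
invertible, and iteration `U⁽⁰⁾ = Y`, `U⁽ᵏ⁾ = M·U_{k−1}`, `U⁽ᵏ⁻¹⁾ = U_{k−1}·R_{k−1}`
(`R_{k−1}` invertible) for the filter matrix `M = S·D·S⁻¹`,
`D = (1/(2π√−1)) Σ_j ω_j diag((z_j I_d − J)⁻¹, 0)`: for each target block `jj < l`,
writing `c = cum jj` for the index of the corresponding eigenvector column of `S`,
there is `τ ≥ 0` such that for all `k ≥ 1` there is `v` in the column space of
`U⁽ᵏ⁾` with `‖S_{(:,c)} − v‖₂ ≤ τ (|f̃(λ_{lp})|/|f̃(λ_{jj})|)ᵏ`; in particular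
`‖(I − Q₍ₖ₎) S_{(:,c)}‖₂ ≤ τ (|f̃(λ_{lp})|/|f̃(λ_{jj})|)ᵏ` for the orthogonal
projector `Q₍ₖ₎` onto the column space of `U⁽ᵏ⁾`. -/
theorem stmt_17 (n d m q l lp s t : ℕ) (hd : d ≤ n) (htn : t ≤ n)
    (A B S T Mmat D : Matrix (Fin n) (Fin n) ℂ)
    (J : Matrix (Fin d) (Fin d) ℂ)
    (dvec : ℕ → ℕ) (lam : ℕ → ℂ) (cum : ℕ → ℕ)
    (hcum : ∀ i, cum i = ∑ i' ∈ Finset.range i, dvec i')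
    (hdpos : ∀ i, i < m → 1 ≤ dvec i)
    (hsum : cum m = d)
    (hlp : l ≤ lp) (hlpm : lp < m)
    (hs : s = cum l) (ht : t = cum (lp + 1))
    (hsimple : ∀ i, l ≤ i → i < m → dvec i = 1)
    (hJ : ∀ i, i < m → ∀ a b : Fin d, cum i ≤ (a : ℕ) → (a : ℕ) < cum (i + 1) →
      J a b = if (b : ℕ) = (a : ℕ) then lam i
        else if (b : ℕ) = (a : ℕ) + 1 ∧ (b : ℕ) < cum (i + 1) then 1 else 0)
    (hS : IsUnit S) (hT : IsUnit T)
    (hA : T * A * S =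
      (Matrix.reindex (finSumFinEquiv.trans (finCongr (Nat.add_sub_cancel' hd)))
        (finSumFinEquiv.trans (finCongr (Nat.add_sub_cancel' hd))))
        (Matrix.fromBlocks J 0 0 1))
    (hB : T * B * S =
      (Matrix.reindex (finSumFinEquiv.trans (finCongr (Nat.add_sub_cancel' hd)))
        (finSumFinEquiv.trans (finCongr (Nat.add_sub_cancel' hd))))
        (Matrix.fromBlocks 1 0 0 0))
    (z w : Fin q → ℂ)
    (hz : ∀ j : Fin q, (z j • (1 : Matrix (Fin d) (Fin d) ℂ) - J).det ≠ 0)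
    (ft : ℂ → ℂ)
    (hft : ∀ μ : ℂ, ft μ =
      (1 / (2 * (Real.pi : ℂ) * Complex.I)) * ∑ j : Fin q, w j / (z j - μ))
    (hord : ∀ i i', i ≤ i' → i' < m →
      ‖ft (lam i')‖ ≤ ‖ft (lam i)‖)
    (hne : ∀ i, i < l → ft (lam i) ≠ 0)
    (Y : Matrix (Fin n) (Fin t) ℂ)
    (hY : IsUnit (S⁻¹.submatrix (Fin.castLE htn) id * Y))
    (hD : D = (1 / (2 * (Real.pi : ℂ) * Complex.I)) •
      ∑ j : Fin q, w j •
        (Matrix.reindex (finSumFinEquiv.trans (finCongr (Nat.add_sub_cancel' hd)))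
          (finSumFinEquiv.trans (finCongr (Nat.add_sub_cancel' hd))))
          (Matrix.fromBlocks (z j • (1 : Matrix (Fin d) (Fin d) ℂ) - J)⁻¹ 0 0 0))
    (hM : Mmat = S * D * S⁻¹)
    (U Uk : ℕ → Matrix (Fin n) (Fin t) ℂ)
    (R : ℕ → Matrix (Fin t) (Fin t) ℂ)
    (hU0 : U 0 = Y) (hUk0 : Uk 0 = Y)
    (hQR : ∀ k, 1 ≤ k → U k = Uk k * R k ∧ IsUnit (R k))
    (hIter : ∀ k, 1 ≤ k → U k = Mmat * Uk (k - 1)) :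
    ∀ jj, jj < l → ∀ c : Fin n, (c : ℕ) = cum jj →
      ∃ τ : ℝ, 0 ≤ τ ∧ ∀ k, 1 ≤ k →
        (∃ v ∈ LinearMap.range (U k).mulVecLin,
          e2Norm ((fun i => S i c) - v) ≤
            τ * (‖ft (lam lp)‖ / ‖ft (lam jj)‖) ^ k) ∧
        (∀ Qk : Matrix (Fin n) (Fin n) ℂ, Qk.IsHermitian → Qk * Qk = Qk →
          LinearMap.range Qk.mulVecLin = LinearMap.range (U k).mulVecLin →
          e2Norm ((1 - Qk).mulVec fun i => S i c) ≤
            τ * (‖ft (lam lp)‖ / ‖ft (lam jj)‖) ^ k) := by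
  intro jj hjl c hc
  have hjm : jj < m := by omega
  -- cumulative sum facts
  have hcum0 : cum 0 = 0 := by rw [hcum]; simp
  have hstep : ∀ i, cum (i + 1) = cum i + dvec i := by
    intro i; rw [hcum, hcum, Finset.sum_range_succ]
  have hmono : ∀ i i' : ℕ, i ≤ i' → cum i ≤ cum i' := by
    intro i i' h; rw [hcum, hcum]
    exact Finset.sum_le_sum_of_subset (Finset.range_subset_range.2 h)
  have htd : t ≤ d := by
    rw [ht, ← hsum]; exact hmono _ _ hlpm
  have hct : (c : ℕ) < t := by
    have h1 := hstep jj
    have h2 := hdpos jj hjm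
    have h3 := hmono (jj + 1) (lp + 1) (by omega)
    omega
  have hsimpleCum : ∀ k, lp + 1 + k ≤ m → cum (lp + 1 + k) = t + k := by
    intro k
    induction k with
    | zero => intro _; simpa using ht.symm
    | succ k ih =>
        intro hk
        have h1 : lp + 1 + (k + 1) = (lp + 1 + k) + 1 := by omega
        rw [h1, hstep, ih (by omega), hsimple (lp + 1 + k) (by omega) (by omega)]
        omega
  have hdm : d = t + (m - (lp + 1)) := by
    have h1 := hsimpleCum (m - (lp + 1)) (by omega)
    rw [show lp + 1 + (m - (lp + 1)) = m by omega] at h1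
    omega
  have hblk : ∀ i : Fin n, t ≤ (i : ℕ) → (i : ℕ) < d →
      lp + 1 + ((i : ℕ) - t) < m ∧ cum (lp + 1 + ((i : ℕ) - t)) = (i : ℕ) := by
    intro i h1 h2
    have h3 : lp + 1 + ((i : ℕ) - t) < m := by omega
    exact ⟨h3, by rw [hsimpleCum _ (by omega)]; omega⟩
  have hblockOf : ∀ r : ℕ, r < d → ∃ i, i < m ∧ cum i ≤ r ∧ r < cum (i + 1) := by
    intro r hr
    exact exists_block cum hcum0 m r (by omega)
  -- column of J
  have hJcol : ∀ β, β < m → ∀ a0 : Fin d, (a0 : ℕ) = cum β →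
      ∀ r : Fin d, J r a0 = if r = a0 then lam β else 0 := by
    intro β hβ a0 ha0 r
    obtain ⟨i, him, h1, h2⟩ := hblockOf (r : ℕ) r.isLt
    rw [hJ i him r a0 h1 h2]
    by_cases he : (a0 : ℕ) = (r : ℕ)
    · have hra : r = a0 := Fin.ext he.symm
      have hiβ : i = β := by
        rcases Nat.lt_trichotomy i β with h | h | h
        · exfalso; have := hmono (i + 1) β h; omega
        · exact h
        · exfalso
          have h4 := hmono (β + 1) i h
          have h5 := hstep β
          have h6 := hdpos β hβ
          omega
      simp [he, hra, hiβ]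
    · have hra : ¬ r = a0 := fun h => he (congrArg Fin.val h).symm
      rw [if_neg he, if_neg, if_neg hra]
      rintro ⟨h3, h4⟩
      rcases le_or_gt β i with h | h
      · have := hmono β i h; omega
      · have := hmono (i + 1) β h; omega
  -- the reindexing equivalence
  set EE : (Fin d ⊕ Fin (n - d)) ≃ Fin n :=
    finSumFinEquiv.trans (finCongr (Nat.add_sub_cancel' hd)) with hEE
  have hEval : ∀ a : Fin d, ((EE (Sum.inl a) : Fin n) : ℕ) = (a : ℕ) := by
    intro a
    simp [hEE, finCongr_apply]
  have hEsymm_lt : ∀ (i : Fin n) (h : (i : ℕ) < d), EE.symm i = Sum.inl ⟨(i : ℕ), h⟩ := by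
    intro i h
    rw [Equiv.symm_apply_eq]
    exact Fin.ext (hEval ⟨(i : ℕ), h⟩).symm
  have hEsymm_ge : ∀ i : Fin n, d ≤ (i : ℕ) → ∃ rr : Fin (n - d), EE.symm i = Sum.inr rr := by
    intro i h
    rcases hss : EE.symm i with a | rr
    · exfalso
      have h1 : EE (Sum.inl a) = i := by rw [← hss, Equiv.apply_symm_apply]
      have h2 := congrArg Fin.val h1
      rw [hEval a] at h2
      have := a.isLt
      omega
    · exact ⟨rr, rfl⟩
  -- eigenvalue-coefficient map
  set μ := ft (lam jj) with hμdef
  have hμ0 : μ ≠ 0 := hne jj hjl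
  set ρ := ‖ft (lam lp)‖ with hρdef
  have hρ0 : 0 ≤ ρ := norm_nonneg _
  set α : Fin n → ℂ := fun i => if (i : ℕ) < t then μ
    else if (i : ℕ) < d then ft (lam (lp + 1 + ((i : ℕ) - t))) else 0 with hα
  -- column structure of D
  have hDcol : ∀ b : Fin n, (b = c ∨ t ≤ (b : ℕ)) →
      ∀ i, D i b = if i = b then α b else 0 := by
    intro b hb i
    by_cases hbd : (b : ℕ) < d
    · -- find block data
      obtain ⟨β, hβm, hβc, hαb⟩ : ∃ β, β < m ∧ cum β = (b : ℕ) ∧ α b = ft (lam β) := by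
        by_cases hbt : (b : ℕ) < t
        · have hbc : b = c := by
            rcases hb with h | h
            · exact h
            · omega
          refine ⟨jj, hjm, ?_, ?_⟩
          · rw [hbc, hc]
          · simp [hα, hbt, hμdef]
        · have h1 := hblk b (by omega) hbd
          refine ⟨lp + 1 + ((b : ℕ) - t), h1.1, h1.2, ?_⟩
          simp [hα, hbt, hbd]
      set a0 : Fin d := ⟨(b : ℕ), hbd⟩ with ha0
      have hN : ∀ j : Fin q, ∀ r : Fin d,
          ((z j • (1 : Matrix (Fin d) (Fin d) ℂ) - J)⁻¹) r a0 =
            if r = a0 then (z j - lam β)⁻¹ else 0 := by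
        intro j
        apply inv_col _ (isUnit_iff_ne_zero.mpr (hz j))
        intro r
        have h1 := hJcol β hβm a0 (by simp [ha0, hβc]) r
        rw [Matrix.sub_apply, Matrix.smul_apply, Matrix.one_apply, h1]
        by_cases hr : r = a0
        · simp [hr]
        · simp [hr]
      rw [hD]
      simp only [Matrix.smul_apply, Matrix.sum_apply, Matrix.reindex_apply,
        Matrix.submatrix_apply, smul_eq_mul, ← hEE]
      rw [hEsymm_lt b hbd]
      by_cases hid : (i : ℕ) < d
      · rw [hEsymm_lt i hid]
        simp only [Matrix.fromBlocks_apply₁₁]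
        have hiff : ((⟨(i : ℕ), hid⟩ : Fin d) = a0) ↔ i = b := by
          rw [Fin.ext_iff, Fin.ext_iff]
        rw [Finset.sum_congr rfl fun j _ => by rw [hN j ⟨(i : ℕ), hid⟩]]
        by_cases hib : i = b
        · rw [if_pos hib, hαb, hft (lam β)]
          simp only [if_pos (hiff.mpr hib)]
          congr 1
        · simp [if_neg hib, if_neg (fun h => hib (hiff.mp h))]
      · obtain ⟨rr, hrr⟩ := hEsymm_ge i (by omega)
        rw [hrr]
        simp only [Matrix.fromBlocks_apply₂₁, Matrix.zero_apply]
        have hib : i ≠ b := by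
          intro h
          rw [h] at hid
          exact hid hbd
        simp [if_neg hib]
    · -- b outside the first d coordinates : zero column
      have hbt : ¬ (b : ℕ) < t := by omega
      have hαb : α b = 0 := by simp [hα, hbt, hbd]
      obtain ⟨rr, hrr⟩ := hEsymm_ge b (by omega)
      rw [hD]
      simp only [Matrix.smul_apply, Matrix.sum_apply, Matrix.reindex_apply,
        Matrix.submatrix_apply, smul_eq_mul, ← hEE]
      rw [hrr]
      have hall : ∀ s0 : Fin d ⊕ Fin (n - d), ∀ j : Fin q,
          (Matrix.fromBlocks ((z j • (1 : Matrix (Fin d) (Fin d) ℂ) - J)⁻¹)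
            0 0 0) s0 (Sum.inr rr) = 0 := by
        rintro (a | r2) j
        · simp
        · simp
      rw [Finset.sum_congr rfl fun j _ => by rw [hall (EE.symm i) j, mul_zero]]
      simp [hαb]
  -- D acts diagonally on vectors supported outside the strict part
  have hDmul : ∀ x' : Fin n → ℂ, (∀ i0, i0 ≠ c → (i0 : ℕ) < t → x' i0 = 0) →
      D.mulVec x' = fun i => α i * x' i := by
    intro x' hx'
    funext i
    have hterm : ∀ b0, D i b0 * x' b0 = (if i = b0 then α b0 else 0) * x' b0 := by
      intro b0
      by_cases hb0 : x' b0 = 0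
      · rw [hb0, mul_zero, mul_zero]
      · have hgood : b0 = c ∨ t ≤ (b0 : ℕ) := by
          by_contra hcon
          push_neg at hcon
          exact hb0 (hx' b0 hcon.1 (by omega))
        rw [hDcol b0 hgood i]
    show ∑ b0, D i b0 * x' b0 = α i * x' i
    rw [Finset.sum_congr rfl fun b0 _ => hterm b0]
    simp [ite_mul, Finset.sum_ite_eq]
  -- the starting vector
  set W' : Matrix (Fin t) (Fin t) ℂ := S⁻¹.submatrix (Fin.castLE htn) id * Y with hW'
  have hWdet : IsUnit W'.det := (Matrix.isUnit_iff_isUnit_det _).1 hY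
  set c' : Fin t := ⟨(c : ℕ), hct⟩ with hc'
  set z₀ : Fin t → ℂ := W'⁻¹.mulVec (Pi.single c' 1 : Fin t → ℂ) with hz₀
  set y : Fin n → ℂ := Y.mulVec z₀ with hy
  set x : Fin n → ℂ := S⁻¹.mulVec y with hxdef
  have hxt : ∀ i : Fin n, (i : ℕ) < t → x i = if i = c then 1 else 0 := by
    intro i hi
    have h1 : x i = ((S⁻¹ * Y).mulVec z₀) i := by
      rw [hxdef, hy, Matrix.mulVec_mulVec]
    have h2 : ∀ b, (S⁻¹ * Y) i b = W' ⟨(i : ℕ), hi⟩ b := by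
      intro b
      rw [hW']
      simp only [Matrix.mul_apply, Matrix.submatrix_apply, id]
      refine Finset.sum_congr rfl fun kk _ => ?_
      congr 1
    have h3 : x i = (W'.mulVec z₀) ⟨(i : ℕ), hi⟩ := by
      rw [h1]
      simp only [Matrix.mulVec, dotProduct]
      exact Finset.sum_congr rfl fun b _ => by rw [h2 b]
    have h4 : W'.mulVec z₀ = Pi.single c' 1 := by
      rw [hz₀, Matrix.mulVec_mulVec, Matrix.mul_nonsing_inv _ hWdet, Matrix.one_mulVec]
    rw [h3, h4]
    simp [Pi.single_apply, hc', Fin.ext_iff]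
  have hxsupp : ∀ i, i ≠ c → (i : ℕ) < t → x i = 0 := by
    intro i h1 h2
    rw [hxt i h2, if_neg h1]
  -- powers of D
  have hDk : ∀ k : ℕ, (D ^ k).mulVec x = fun i => α i ^ k * x i := by
    intro k
    induction k with
    | zero => simp [Matrix.one_mulVec]
    | succ k ih =>
        have hsupp' : ∀ i0, i0 ≠ c → (i0 : ℕ) < t → α i0 ^ k * x i0 = 0 := by
          intro i0 h1 h2
          rw [hxsupp i0 h1 h2, mul_zero]
        rw [pow_succ', ← Matrix.mulVec_mulVec, ih, hDmul _ hsupp']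
        funext i
        ring
  -- powers of Mmat
  have hSdet : IsUnit S.det := (Matrix.isUnit_iff_isUnit_det S).1 hS
  have hMk : ∀ k : ℕ, Mmat ^ k = S * D ^ k * S⁻¹ := by
    intro k
    induction k with
    | zero => rw [pow_zero, pow_zero, Matrix.mul_one, Matrix.mul_nonsing_inv _ hSdet]
    | succ k ih =>
        rw [pow_succ, ih, hM, pow_succ]
        calc S * D ^ k * S⁻¹ * (S * D * S⁻¹)
            = S * D ^ k * (S⁻¹ * S) * D * S⁻¹ := by
              simp only [Matrix.mul_assoc]
          _ = S * (D ^ k * D) * S⁻¹ := by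
              rw [Matrix.nonsing_inv_mul _ hSdet, Matrix.mul_one]
              simp only [Matrix.mul_assoc]
  -- relation between U k and Mmat ^ k * Y
  have hUC : ∀ k, 1 ≤ k → ∃ C : Matrix (Fin t) (Fin t) ℂ, IsUnit C ∧ U k * C = Mmat ^ k * Y := by
    intro k hk
    induction k, hk using Nat.le_induction with
    | base =>
        refine ⟨1, isUnit_one, ?_⟩
        rw [Matrix.mul_one, hIter 1 le_rfl, pow_one]
        norm_num [hUk0]
    | succ k hk ih =>
        obtain ⟨C, hC, hCU⟩ := ih
        have hRk := hQR k hk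
        have hRdet : IsUnit (R k).det := (Matrix.isUnit_iff_isUnit_det _).1 hRk.2
        have hUkk : Uk k = U k * (R k)⁻¹ := by
          rw [hRk.1, Matrix.mul_assoc, Matrix.mul_nonsing_inv _ hRdet, Matrix.mul_one]
        refine ⟨R k * C, hRk.2.mul hC, ?_⟩
        have h5 : U (k + 1) = Mmat * (U k * (R k)⁻¹) := by
          rw [hIter (k + 1) (by omega), Nat.add_sub_cancel, hUkk]
        rw [h5]
        calc Mmat * (U k * (R k)⁻¹) * (R k * C)
            = Mmat * (U k * ((R k)⁻¹ * R k) * C) := by simp only [Matrix.mul_assoc]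
          _ = Mmat * (U k * C) := by
              rw [Matrix.nonsing_inv_mul _ hRdet, Matrix.mul_one]
          _ = Mmat * (Mmat ^ k * Y) := by rw [hCU]
          _ = Mmat ^ (k + 1) * Y := by rw [pow_succ', Matrix.mul_assoc]
  -- the constant
  set g : Fin n → ℂ := fun i => if (i : ℕ) < t then 0 else x i with hg
  refine ⟨‖euclMap S‖ * e2Norm g, mul_nonneg (norm_nonneg _) (e2Norm_nonneg g), ?_⟩
  intro k hk
  have hμk : μ ^ k ≠ 0 := pow_ne_zero k hμ0
  have habsμ : 0 < ‖μ‖ := norm_pos_iff.mpr hμ0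
  set vk : Fin n → ℂ := ((μ ^ k)⁻¹ : ℂ) • (Mmat ^ k).mulVec y with hvk
  obtain ⟨C, hC, hCU⟩ := hUC k hk
  have hmem : vk ∈ LinearMap.range (U k).mulVecLin := by
    refine ⟨((μ ^ k)⁻¹ : ℂ) • (C.mulVec z₀), ?_⟩
    rw [Matrix.mulVecLin_apply, Matrix.mulVec_smul, hvk]
    congr 1
    rw [Matrix.mulVec_mulVec, hCU, ← Matrix.mulVec_mulVec]
  set wk : Fin n → ℂ := ((μ ^ k)⁻¹ : ℂ) • (fun i => α i ^ k * x i) - Pi.single c 1 with hwk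
  have hvs : vk - (fun i => S i c) = S.mulVec wk := by
    have h1 : (Mmat ^ k).mulVec y = S.mulVec ((D ^ k).mulVec x) := by
      rw [hMk k, ← Matrix.mulVec_mulVec, ← Matrix.mulVec_mulVec]
    have h2 : (fun i => S i c) = S.mulVec (Pi.single c 1) := by
      funext i
      simp [Matrix.mulVec, dotProduct, Pi.single_apply, mul_ite,
        Finset.sum_ite_eq']
    rw [hwk, Matrix.mulVec_sub, Matrix.mulVec_smul, hvk, h1, hDk k, ← h2]
  have hpt : ∀ i, ‖wk i‖ ≤
      (ρ / ‖μ‖) ^ k * ‖g i‖ := by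
    intro i
    have hwki : wk i = (μ ^ k)⁻¹ * (α i ^ k * x i) - (Pi.single c 1 : Fin n → ℂ) i := by
      rw [hwk]
      simp [smul_eq_mul]
    by_cases hit : (i : ℕ) < t
    · have hgi : g i = 0 := by simp [hg, hit]
      have hαi : α i = μ := by simp [hα, hit]
      by_cases hic : i = c
      · have hxi : x i = 1 := by rw [hxt i hit, if_pos hic]
        have hsi : (Pi.single c 1 : Fin n → ℂ) i = 1 := by rw [hic]; simp
        rw [hwki, hxi, hsi, hαi, mul_one, inv_mul_cancel₀ hμk, sub_self]
        simp [hgi]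
      · have hxi : x i = 0 := hxsupp i hic hit
        have hsi : (Pi.single c 1 : Fin n → ℂ) i = 0 := Pi.single_eq_of_ne hic 1
        rw [hwki, hxi, hsi, mul_zero, mul_zero, sub_zero]
        simp [hgi]
    · have hic : i ≠ c := by
        intro h
        rw [h] at hit
        exact hit hct
      have hsi : (Pi.single c 1 : Fin n → ℂ) i = 0 := Pi.single_eq_of_ne hic 1
      have hgi : g i = x i := by simp [hg, hit]
      have hαb : ‖α i‖ ≤ ρ := by
        by_cases hidd : (i : ℕ) < d
        · have hβ := hblk i (by omega) hidd
          have : α i = ft (lam (lp + 1 + ((i : ℕ) - t))) := by simp [hα, hit, hidd]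
          rw [this, hρdef]
          exact hord lp _ (by omega) hβ.1
        · have : α i = 0 := by simp [hα, hit, hidd]
          rw [this]
          simpa using hρ0
      rw [hwki, hsi, sub_zero, hgi]
      rw [norm_mul, norm_mul, norm_inv, norm_pow, norm_pow, div_pow]
      calc (‖μ‖ ^ k)⁻¹ * (‖α i‖ ^ k * ‖x i‖)
          ≤ (‖μ‖ ^ k)⁻¹ * (ρ ^ k * ‖x i‖) := by
            have h6 : ‖α i‖ ^ k ≤ ρ ^ k :=
              pow_le_pow_left₀ (norm_nonneg _) hαb k
            have h7 : (0:ℝ) ≤ (‖μ‖ ^ k)⁻¹ :=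
              inv_nonneg.mpr (pow_nonneg (norm_nonneg _) k)
            have h8 : (0:ℝ) ≤ ‖x i‖ := norm_nonneg _
            nlinarith [mul_le_mul_of_nonneg_right h6 h8]
        _ = ρ ^ k / ‖μ‖ ^ k * ‖x i‖ := by ring
  have hnorm : e2Norm wk ≤ (ρ / ‖μ‖) ^ k * e2Norm g :=
    e2Norm_le_mul wk g _ (pow_nonneg (div_nonneg hρ0 (norm_nonneg _)) k) hpt
  have hbound : e2Norm ((fun i => S i c) - vk) ≤
      ‖euclMap S‖ * e2Norm g * (ρ / ‖μ‖) ^ k := by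
    have h3 : (fun i => S i c) - vk = S.mulVec (-wk) := by
      rw [Matrix.mulVec_neg, ← hvs, neg_sub]
    have hpt' : ∀ i, ‖(-wk) i‖ ≤
        (ρ / ‖μ‖) ^ k * ‖g i‖ := by
      intro i
      simpa using hpt i
    have hnorm' : e2Norm (-wk) ≤ (ρ / ‖μ‖) ^ k * e2Norm g :=
      e2Norm_le_mul (-wk) g _ (pow_nonneg (div_nonneg hρ0 (norm_nonneg _)) k) hpt'
    calc e2Norm ((fun i => S i c) - vk) = e2Norm (S.mulVec (-wk)) := by rw [h3]
      _ ≤ ‖euclMap S‖ * e2Norm (-wk) := e2Norm_mulVec_le S (-wk)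
      _ ≤ ‖euclMap S‖ * ((ρ / ‖μ‖) ^ k * e2Norm g) := by
          exact mul_le_mul_of_nonneg_left hnorm' (norm_nonneg _)
      _ = ‖euclMap S‖ * e2Norm g * (ρ / ‖μ‖) ^ k := by ring
  constructor
  · exact ⟨vk, hmem, hbound⟩
  · intro Qk hH hQI hrange
    have hvmem : vk ∈ LinearMap.range Qk.mulVecLin := by
      rw [hrange]
      exact hmem
    obtain ⟨uarg, huarg⟩ := hvmem
    rw [Matrix.mulVecLin_apply] at huarg
    have hQv : Qk.mulVec vk = vk := by
      conv_lhs => rw [← huarg]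
      rw [Matrix.mulVec_mulVec, hQI, huarg]
    have heq : (1 - Qk).mulVec (fun i => S i c) =
        ((fun i => S i c) - vk) - Qk.mulVec ((fun i => S i c) - vk) := by
      rw [Matrix.sub_mulVec, Matrix.one_mulVec, Matrix.mulVec_sub, hQv]
      abel
    rw [heq]
    exact le_trans (proj_norm_le Qk hH hQI _) hbound
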